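/- For every k ∈ ℕ and all (x,y,q) ∈ ℝ³, the k-th power of the operator X_s applied to the Gaussian e^{−q²/2} (regarded as a function of (x,y,q)) satisfies X_s^k e^{−q²/2} = e^{−q²/2} · Σ_{m=0}^{⌊k/2⌋} k! (i x − y)^{k−m} q^{k−2m} y^m / (m! (k−2m)! 2^m). -/

import Mathlib

noncomputable section

open Complex Finset

/-- Points `(x, y, q)` of `ℝ³`. -/
abbrev P3 := ℝ × ℝ × ℝ

/-- Partial derivative with respect to `x`. -/
def pdx (f : P3 → ℂ) : P3 → ℂ := fun p => deriv (fun t => f (t, p.2.1, p.2.2)) p.1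

/-- Partial derivative with respect to `y`. -/
def pdy (f : P3 → ℂ) : P3 → ℂ := fun p => deriv (fun t => f (p.1, t, p.2.2)) p.2.1

/-- Partial derivative with respect to `q`. -/
def pdq (f : P3 → ℂ) : P3 → ℂ := fun p => deriv (fun t => f (p.1, p.2.1, t)) p.2.2

/-- The symplectic Dirac operator `D_s f = i q ∂_y f − ∂_x ∂_q f`. -/
def Ds (f : P3 → ℂ) : P3 → ℂ := fun p =>
  Complex.I * (p.2.2 : ℂ) * pdy f p - pdx (pdq f) p

/-- The operator `X_s f = y ∂_q f + i x q f`. -/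
def Xs (f : P3 → ℂ) : P3 → ℂ := fun p =>
  (p.2.1 : ℂ) * pdq f p + Complex.I * (p.1 : ℂ) * (p.2.2 : ℂ) * f p

/-- The Euler operator `E f = x ∂_x f + y ∂_y f`. -/
def Eul (f : P3 → ℂ) : P3 → ℂ := fun p =>
  (p.1 : ℂ) * pdx f p + (p.2.1 : ℂ) * pdy f p

/-- The Gaussian `e^{−q²/2}`, regarded as a function of `(x,y,q) ∈ ℝ³`. -/
def gauss : P3 → ℂ := fun p => Complex.exp (-(p.2.2 : ℂ) ^ 2 / 2)

/-! ### Auxiliary development -/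

/-- The coefficient `k!/(m!(k-2m)!2^m)`, padded by zero when `2m > k`. -/
def cc (k m : ℕ) : ℂ :=
  if 2*m ≤ k then (k.factorial : ℂ)/((m.factorial : ℂ) * ((k-2*m).factorial : ℂ) * 2^m) else 0

lemma cc_of_lt {k m : ℕ} (h : k < 2*m) : cc k m = 0 := by
  rw [cc, if_neg]; omega

lemma cc_of_le {k m : ℕ} (h : 2*m ≤ k) :
    cc k m = (k.factorial : ℂ)/((m.factorial : ℂ) * ((k-2*m).factorial : ℂ) * 2^m) := by
  rw [cc, if_pos h]

lemma fact_ne (n : ℕ) : ((n.factorial : ℂ)) ≠ 0 :=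
  Nat.cast_ne_zero.2 (Nat.factorial_ne_zero n)

lemma cc_zero' (k : ℕ) : cc k 0 = 1 := by
  rw [cc_of_le (by omega)]
  simp only [Nat.mul_zero, Nat.sub_zero, Nat.factorial_zero, Nat.cast_one, pow_zero, one_mul,
    mul_one]
  exact div_self (fact_ne k)

set_option maxHeartbeats 1000000 in
lemma key (k m : ℕ) (a q y : ℂ) :
    y * (cc k m * a^(k-m) * (((k-2*m:ℕ):ℂ) * q^(k-2*m-1)) * y^m)
    + (a*q) * (cc k (m+1) * a^(k-(m+1)) * q^(k-2*(m+1)) * y^(m+1))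
    = cc (k+1) (m+1) * a^(k+1-(m+1)) * q^(k+1-2*(m+1)) * y^(m+1) := by
  rcases lt_or_ge k (2*m) with h | h
  · rw [cc_of_lt (show k < 2*m by omega), cc_of_lt (show k < 2*(m+1) by omega),
      cc_of_lt (show k+1 < 2*(m+1) by omega), show k - 2*m = 0 by omega]
    simp
  rcases lt_or_ge k (2*m+2) with h' | h'
  · rcases (by omega : k = 2*m ∨ k = 2*m+1) with rfl | rfl
    · rw [cc_of_lt (show 2*m < 2*(m+1) by omega), cc_of_lt (show 2*m+1 < 2*(m+1) by omega),
        show 2*m - 2*m = 0 by omega]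
      simp
    · rw [cc_of_lt (show 2*m+1 < 2*(m+1) by omega), cc_of_le (show 2*m ≤ 2*m+1 by omega),
        cc_of_le (show 2*(m+1) ≤ 2*m+1+1 by omega),
        show 2*m+1 - 2*m - 1 = 0 by omega, show 2*m+1 - 2*m = 1 by omega,
        show 2*m+1 - m = m+1 by omega, show 2*m+1+1 - (m+1) = m+1 by omega,
        show 2*m+1+1 - 2*(m+1) = 0 by omega]
      have e1 : ((2*m+1+1).factorial : ℂ) = (2*m+2) * ((2*m+1).factorial : ℂ) := by
        rw [show 2*m+1+1 = (2*m+1)+1 from rfl, Nat.factorial_succ]; push_cast; ring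
      have e3 : ((m+1).factorial : ℂ) = (m+1) * ((m).factorial : ℂ) := by
        rw [Nat.factorial_succ]; push_cast; ring
      rw [e1, e3]
      have hm1 : (m:ℂ)+1 ≠ 0 := by exact_mod_cast (by omega : (m+1:ℕ) ≠ 0)
      field_simp [fact_ne]
      ring
  · obtain ⟨r, rfl⟩ : ∃ r, k = 2*m+2+r := ⟨k - 2*m - 2, by omega⟩
    rw [cc_of_le (show 2*m ≤ 2*m+2+r by omega), cc_of_le (show 2*(m+1) ≤ 2*m+2+r by omega),
      cc_of_le (show 2*(m+1) ≤ 2*m+2+r+1 by omega),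
      show 2*m+2+r - 2*m - 1 = r+1 by omega, show 2*m+2+r - 2*m = r+2 by omega,
      show 2*m+2+r - m = m+2+r by omega, show 2*m+2+r - (m+1) = m+1+r by omega,
      show 2*m+2+r - 2*(m+1) = r by omega, show 2*m+2+r+1 - (m+1) = m+2+r by omega,
      show 2*m+2+r+1 - 2*(m+1) = r+1 by omega]
    have e1 : ((2*m+2+r+1).factorial : ℂ) = (2*m+3+r) * ((2*m+2+r).factorial : ℂ) := by
      rw [show 2*m+2+r+1 = (2*m+2+r)+1 from rfl, Nat.factorial_succ]; push_cast; ring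
    have e2 : ((r+2).factorial : ℂ) = (r+2) * (r+1) * ((r).factorial : ℂ) := by
      rw [Nat.factorial_succ, Nat.factorial_succ]; push_cast; ring
    have e3 : ((m+1).factorial : ℂ) = (m+1) * ((m).factorial : ℂ) := by
      rw [Nat.factorial_succ]; push_cast; ring
    have e4 : ((r+1).factorial : ℂ) = (r+1) * ((r).factorial : ℂ) := by
      rw [Nat.factorial_succ]; push_cast; ring
    rw [e1, e2, e3, e4]
    have hr2 : (r:ℂ)+2 ≠ 0 := by exact_mod_cast (by omega : (r+2:ℕ) ≠ 0)
    have hr1 : (r:ℂ)+1 ≠ 0 := by exact_mod_cast (by omega : (r+1:ℕ) ≠ 0)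
    have hm1 : (m:ℂ)+1 ≠ 0 := by exact_mod_cast (by omega : (m+1:ℕ) ≠ 0)
    set F := ((2*m+2+r).factorial : ℂ) with hF
    set M := ((m).factorial : ℂ) with hM
    set R := ((r).factorial : ℂ) with hR
    have hMne : M ≠ 0 := fact_ne m
    have hRne : R ≠ 0 := fact_ne r
    have hpow : (2:ℂ)^(m+1) = 2^m * 2 := pow_succ 2 m
    have hPne : (2:ℂ)^m ≠ 0 := pow_ne_zero m two_ne_zero
    have d1 : M * (((r:ℂ)+2)*((r:ℂ)+1)*R) * 2^m ≠ 0 :=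
      mul_ne_zero (mul_ne_zero hMne (mul_ne_zero (mul_ne_zero hr2 hr1) hRne)) hPne
    have d2 : ((m:ℂ)+1)*M * R * (2^m*2) ≠ 0 :=
      mul_ne_zero (mul_ne_zero (mul_ne_zero hm1 hMne) hRne) (mul_ne_zero hPne two_ne_zero)
    have d3 : ((m:ℂ)+1)*M * ((((r:ℂ)+1))*R) * (2^m*2) ≠ 0 :=
      mul_ne_zero (mul_ne_zero (mul_ne_zero hm1 hMne) (mul_ne_zero hr1 hRne))
        (mul_ne_zero hPne two_ne_zero)
    have hc : F/(M * (((r:ℂ)+2)*((r:ℂ)+1)*R) * 2^m) * ((r:ℂ)+2)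
        + F/(((m:ℂ)+1)*M * R * (2^m*2))
        = (2*(m:ℂ)+3+r) * F/(((m:ℂ)+1)*M * ((((r:ℂ)+1))*R) * (2^m*2)) := by
      rw [div_mul_eq_mul_div, div_add_div _ _ d1 d2, div_eq_div_iff (mul_ne_zero d1 d2) d3]
      ring
    clear_value F M R
    push_cast
    linear_combination (a^(m+2+r) * q^(r+1) * y^(m+1)) * hc

/-- The polynomial factor. -/
def TT (k : ℕ) (a q y : ℂ) : ℂ :=
  ∑ m ∈ Finset.range (k+1), cc k m * a^(k-m) * q^(k-2*m) * y^m

/-- Its `q`-derivative. -/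
def DD (k : ℕ) (a q y : ℂ) : ℂ :=
  ∑ m ∈ Finset.range (k+1), cc k m * a^(k-m) * (((k-2*m:ℕ):ℂ) * q^(k-2*m-1)) * y^m

lemma step (k : ℕ) (a q y : ℂ) :
    y * DD k a q y + (a*q) * TT k a q y = TT (k+1) a q y := by
  unfold TT DD
  rw [Finset.mul_sum, Finset.mul_sum]
  have hpad : ∑ m ∈ Finset.range (k+2), (a*q) * (cc k m * a^(k-m) * q^(k-2*m) * y^m)
      = ∑ m ∈ Finset.range (k+1), (a*q) * (cc k m * a^(k-m) * q^(k-2*m) * y^m) := by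
    rw [Finset.sum_range_succ, cc_of_lt (show k < 2*(k+1) by omega)]
    simp
  rw [← hpad,
    Finset.sum_range_succ' (fun m => (a*q) * (cc k m * a^(k-m) * q^(k-2*m) * y^m)) (k+1),
    Finset.sum_range_succ' (fun m => cc (k+1) m * a^(k+1-m) * q^(k+1-2*m) * y^m) (k+1)]
  have hmain : (∑ m ∈ Finset.range (k+1),
        y * (cc k m * a^(k-m) * (((k-2*m:ℕ):ℂ) * q^(k-2*m-1)) * y^m))
      + ∑ m ∈ Finset.range (k+1),
        (a*q) * (cc k (m+1) * a^(k-(m+1)) * q^(k-2*(m+1)) * y^(m+1))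
      = ∑ m ∈ Finset.range (k+1),
          cc (k+1) (m+1) * a^(k+1-(m+1)) * q^(k+1-2*(m+1)) * y^(m+1) := by
    rw [← Finset.sum_add_distrib]
    exact Finset.sum_congr rfl fun m _ => key k m a q y
  have h0 : (a*q) * (cc k 0 * a^(k-0) * q^(k-2*0) * y^0)
      = cc (k+1) 0 * a^(k+1-0) * q^(k+1-2*0) * y^0 := by
    rw [cc_zero', cc_zero']
    simp only [Nat.mul_zero, Nat.sub_zero, pow_zero, mul_one, one_mul, pow_succ]
    ring
  rw [← add_assoc, hmain, h0]

lemma hasDerivAt_TT (k : ℕ) (a y z : ℂ) :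
    HasDerivAt (fun q : ℂ => TT k a q y) (DD k a z y) z := by
  unfold TT DD
  exact HasDerivAt.fun_sum fun m _ =>
    (HasDerivAt.const_mul (cc k m * a^(k-m)) (hasDerivAt_pow (k-2*m) z)).mul_const (y^m)

lemma hasDerivAt_G (k : ℕ) (a y z : ℂ) :
    HasDerivAt (fun q : ℂ => Complex.exp (-q^2/2) * TT k a q y)
      (Complex.exp (-z^2/2) * (-z * TT k a z y + DD k a z y)) z := by
  have h1 : HasDerivAt (fun q : ℂ => -q^2/2) (-z) z := by
    have h := ((hasDerivAt_pow 2 z).neg).div_const 2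
    have e : -(((2:ℕ):ℂ) * z^(2-1))/2 = -z := by push_cast; ring
    rw [e] at h
    exact h
  have h := (h1.cexp).fun_mul (hasDerivAt_TT k a y z)
  refine h.congr_deriv ?_
  ring

lemma main_aux (k : ℕ) : ∀ p : P3, (Xs^[k] gauss) p
    = Complex.exp (-(p.2.2:ℂ)^2/2) * TT k (Complex.I*p.1 - p.2.1) p.2.2 p.2.1 := by
  induction k with
  | zero =>
    intro p
    simp [gauss, TT, cc_zero']
  | succ k ih =>
    intro p
    rw [Function.iterate_succ_apply']
    have hfun : Xs^[k] gauss = fun p : P3 =>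
        Complex.exp (-(p.2.2:ℂ)^2/2) * TT k (Complex.I*p.1 - p.2.1) p.2.2 p.2.1 := funext ih
    rw [hfun]
    obtain ⟨x, y, q⟩ := p
    simp only [Xs, pdq]
    have hd : HasDerivAt (fun t : ℝ =>
          Complex.exp (-((t:ℂ))^2/2) * TT k (Complex.I*(x:ℝ) - (y:ℝ)) t y)
        (Complex.exp (-(q:ℂ)^2/2) * (-(q:ℂ) * TT k (Complex.I*(x:ℝ)-(y:ℝ)) q y
          + DD k (Complex.I*(x:ℝ)-(y:ℝ)) q y)) q :=
      (hasDerivAt_G k (Complex.I*(x:ℝ)-(y:ℝ)) (y:ℝ) (q:ℝ)).comp_ofReal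
    rw [hd.deriv]
    have hs := step k (Complex.I*(x:ℝ) - (y:ℝ)) (q:ℝ) (y:ℝ)
    linear_combination (Complex.exp (-(q:ℂ)^2/2)) * hs

lemma TT_eq (k : ℕ) (a q y : ℂ) : TT k a q y
    = ∑ m ∈ Finset.range (k/2+1),
        (Nat.factorial k : ℂ) * a^(k-m) * q^(k-2*m) * y^m
          / ((Nat.factorial m : ℂ) * (Nat.factorial (k-2*m) : ℂ) * 2^m) := by
  rw [TT, ← Finset.sum_subset (Finset.range_subset_range.2 (by omega : k/2+1 ≤ k+1))]
  · refine Finset.sum_congr rfl fun m hm => ?_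
    have h2m : 2*m ≤ k := by
      have := Finset.mem_range.1 hm; omega
    rw [cc_of_le h2m]
    ring
  · intro m hmt hms
    have h1 := Finset.mem_range.1 hmt
    have h2 : ¬ m < k/2+1 := fun hh => hms (Finset.mem_range.2 hh)
    rw [cc_of_lt (show k < 2*m by omega)]
    simp

/-- `X_s^k e^{−q²/2} = e^{−q²/2} Σ_{m=0}^{⌊k/2⌋} k! (ix−y)^{k−m} q^{k−2m} y^m / (m!(k−2m)!2^m)`. -/
theorem Xs_pow_gauss (k : ℕ) (p : P3) :
    (Xs^[k] gauss) p = Complex.exp (-(p.2.2 : ℂ) ^ 2 / 2) *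
      ∑ m ∈ Finset.range (k / 2 + 1),
        (Nat.factorial k : ℂ) * (Complex.I * (p.1 : ℂ) - (p.2.1 : ℂ)) ^ (k - m) *
          (p.2.2 : ℂ) ^ (k - 2 * m) * (p.2.1 : ℂ) ^ m /
            ((Nat.factorial m : ℂ) * (Nat.factorial (k - 2 * m) : ℂ) * 2 ^ m) := by
  rw [main_aux k p, TT_eq]
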